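/- For every λ ≥ 0, every natural number j ≥ 1 and every natural number i with i ≠ j: λ·(g(j+1,λ,{i}) − g(j,λ,{i})) ≤ 0. -/

import Mathlib

open scoped BigOperators

/-- Poisson pmf: Po(k;lam) = lam^k * e^(-lam) / k!  (with the convention 0^0 = 1). -/
noncomputable def Po (k : ℕ) (lam : ℝ) : ℝ := lam ^ k * Real.exp (-lam) / (Nat.factorial k)

/-- Poisson measure of a set A of naturals: Po(A;lam) = sum over k in A of Po(k;lam). -/
noncomputable def PoSet (A : Set ℕ) (lam : ℝ) : ℝ := ∑' k : A, Po k lam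

/-- The scalar Stein-Chen solution g(j,lam,A), defined recursively by g(0,lam,A) = 0 and
g(j,lam,A) = lam⁻¹ * ((j-1)*g(j-1,lam,A) + 1_A(j-1) - Po(A;lam))
             + (1/j) * 1_{lam=0} * (1_A(0) - 1_A(j)) for j ≥ 1,
with the convention 0⁻¹ = 0. -/
noncomputable def steinChen : ℕ → ℝ → Set ℕ → ℝ
  | 0, _, _ => 0
  | (j + 1), lam, A =>
      lam⁻¹ * ((j : ℝ) * steinChen j lam A
          + A.indicator (fun _ => (1 : ℝ)) j - PoSet A lam)
        + (1 / ((j : ℝ) + 1)) * (if lam = 0 then (1 : ℝ) else 0)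
          * (A.indicator (fun _ => (1 : ℝ)) 0 - A.indicator (fun _ => (1 : ℝ)) (j + 1))

lemma PoSet_singleton (i : ℕ) (lam : ℝ) : PoSet {i} lam = Po i lam := by
  exact tsum_singleton i fun n => Po n lam

lemma indicator_singleton (i n : ℕ) :
    ({i} : Set ℕ).indicator (fun _ => (1:ℝ)) n = if n = i then 1 else 0 := by
  simp [Set.indicator_apply]

/-- Closed form for the Stein–Chen solution on a singleton set when `lam > 0`. -/
lemma steinChen_closed (lam : ℝ) (hl : 0 < lam) (i : ℕ) (j : ℕ) :
    steinChen (j+1) lam {i} =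
      ((j.factorial : ℝ) * lam ^ i) / (lam ^ (j+1) * (i.factorial : ℝ)) *
        ((if i ≤ j then (1:ℝ) else 0)
          - Real.exp (-lam) * ∑ k ∈ Finset.range (j+1), lam ^ k / (k.factorial : ℝ)) := by
  induction j with
  | zero =>
    simp only [steinChen, PoSet_singleton, indicator_singleton, Po, if_neg hl.ne',
      Finset.sum_range_one, Nat.cast_zero, zero_mul, zero_add, mul_zero, add_zero,
      Nat.factorial_zero, Nat.cast_one, pow_zero, pow_one, one_mul]
    by_cases hi : i = 0
    · subst hi
      simp only [if_pos rfl, le_refl, if_pos]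
      field_simp
      simp
    · rw [if_neg (by omega : ¬ (0:ℕ) = i), if_neg (by omega : ¬ i ≤ 0)]
      have hfi : ((i.factorial : ℝ)) ≠ 0 := by positivity
      field_simp
      ring
  | succ j ih =>
    have hrec : steinChen (j+2) lam {i} =
        lam⁻¹ * (((j:ℝ)+1) * steinChen (j+1) lam {i}
          + (if j+1 = i then (1:ℝ) else 0) - Po i lam) := by
      show steinChen ((j+1)+1) lam {i} = _
      rw [steinChen]
      simp [PoSet_singleton, indicator_singleton, if_neg hl.ne']
    rw [hrec, ih]
    have hfi : ((i.factorial : ℝ)) ≠ 0 := by positivity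
    have hfj : ((j.factorial : ℝ)) ≠ 0 := by positivity
    have hfj1 : (((j+1).factorial : ℝ)) = ((j:ℝ)+1) * (j.factorial : ℝ) := by
      push_cast [Nat.factorial_succ]; ring
    have hsum : ∑ k ∈ Finset.range (j+2), lam ^ k / (k.factorial : ℝ)
        = (∑ k ∈ Finset.range (j+1), lam ^ k / (k.factorial : ℝ))
          + lam^(j+1) / (((j+1).factorial : ℝ)) := Finset.sum_range_succ _ _
    rw [hsum, hfj1, Po]
    rcases lt_trichotomy i (j+1) with hc | hc | hc
    · rw [if_pos (by omega : i ≤ j), if_pos (by omega : i ≤ j+1),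
        if_neg (by omega : ¬ j+1 = i)]
      field_simp
      ring
    · subst hc
      rw [if_neg (by omega : ¬ j+1 ≤ j), if_pos (le_refl (j+1)), if_pos rfl, hfj1]
      field_simp
      ring
    · rw [if_neg (by omega : ¬ i ≤ j), if_neg (by omega : ¬ i ≤ j+1),
        if_neg (by omega : ¬ j+1 = i)]
      field_simp
      ring

/-- Finite-sum inequality used in the case `i > j`. -/
lemma steinChen_sum_ineq (lam : ℝ) (hlam : 0 ≤ lam) (m : ℕ) :
    lam * ∑ k ∈ Finset.range (m+1), lam^k / (k.factorial : ℝ)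
      ≤ ((m:ℝ)+1) * ∑ k ∈ Finset.range (m+2), lam^k / (k.factorial : ℝ) := by
  rw [Finset.mul_sum, Finset.sum_range_succ' (fun k => lam^k / (k.factorial : ℝ)) (m+1),
    mul_add, Finset.mul_sum]
  have h1 : ∀ k ∈ Finset.range (m+1),
      lam * (lam^k / (k.factorial : ℝ)) ≤ ((m:ℝ)+1) * (lam^(k+1) / ((k+1).factorial : ℝ)) := by
    intro k hk
    have hk' : k < m+1 := Finset.mem_range.mp hk
    have e1 : lam * (lam^k / (k.factorial : ℝ))
        = ((k:ℝ)+1) * (lam^(k+1) / ((k+1).factorial : ℝ)) := by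
      have : (((k+1).factorial : ℝ)) = ((k:ℝ)+1) * (k.factorial : ℝ) := by
        push_cast [Nat.factorial_succ]; ring
      rw [this]
      have hf : ((k.factorial : ℝ)) ≠ 0 := by positivity
      field_simp
      ring
    rw [e1]
    apply mul_le_mul_of_nonneg_right _ (by positivity)
    have hkm : (k:ℝ) ≤ (m:ℝ) := by exact_mod_cast Nat.lt_succ_iff.mp hk'
    linarith
  have h2 : ∑ k ∈ Finset.range (m+1), lam * (lam^k / (k.factorial : ℝ))
      ≤ ∑ k ∈ Finset.range (m+1), ((m:ℝ)+1) * (lam^(k+1) / ((k+1).factorial : ℝ)) :=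
    Finset.sum_le_sum h1
  have h3 : (0:ℝ) ≤ ((m:ℝ)+1) * (lam^0 / ((Nat.factorial 0 : ℕ) : ℝ)) := by positivity
  linarith

/-- Tail-sum inequality used in the case `i < j`. -/
lemma steinChen_tail_ineq (lam : ℝ) (hlam : 0 ≤ lam) (m : ℕ) :
    ((m:ℝ)+1) * ∑' k : ℕ, lam^(k+(m+2)) / ((k+(m+2)).factorial : ℝ)
      ≤ lam * ∑' k : ℕ, lam^(k+(m+1)) / ((k+(m+1)).factorial : ℝ) := by
  have hs : Summable (fun n : ℕ => lam^n / (n.factorial : ℝ)) :=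
    Real.summable_pow_div_factorial lam
  have hs2 : Summable (fun k : ℕ => lam^(k+(m+2)) / ((k+(m+2)).factorial : ℝ)) :=
    (summable_nat_add_iff (f := fun n : ℕ => lam^n / (n.factorial : ℝ)) (m+2)).2 hs
  have hs1 : Summable (fun k : ℕ => lam^(k+(m+1)) / ((k+(m+1)).factorial : ℝ)) :=
    (summable_nat_add_iff (f := fun n : ℕ => lam^n / (n.factorial : ℝ)) (m+1)).2 hs
  rw [← tsum_mul_left, ← tsum_mul_left]
  refine Summable.tsum_le_tsum ?_ (hs2.mul_left _) (hs1.mul_left _)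
  intro k
  have e1 : lam * (lam^(k+(m+1)) / ((k+(m+1)).factorial : ℝ))
      = ((k:ℝ)+(m:ℝ)+2) * (lam^(k+(m+2)) / ((k+(m+2)).factorial : ℝ)) := by
    have h2 : k+(m+2) = (k+(m+1))+1 := by omega
    rw [h2]
    have : ((((k+(m+1))+1).factorial : ℝ)) = ((k:ℝ)+(m:ℝ)+2) * ((k+(m+1)).factorial : ℝ) := by
      push_cast [Nat.factorial_succ]; ring
    rw [this]
    have hf : (((k+(m+1)).factorial : ℝ)) ≠ 0 := by positivity
    rw [pow_succ]
    field_simp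
  rw [e1]
  apply mul_le_mul_of_nonneg_right _ (by positivity)
  have : (0:ℝ) ≤ (k:ℝ) := by positivity
  linarith

/-- Express `1 - e^{-lam} * (partial sum)` as `e^{-lam} * (tail sum)`. -/
lemma steinChen_one_sub_exp_sum (lam : ℝ) (n : ℕ) :
    1 - Real.exp (-lam) * ∑ k ∈ Finset.range n, lam^k / (k.factorial : ℝ)
      = Real.exp (-lam) * ∑' k : ℕ, lam^(k+n) / ((k+n).factorial : ℝ) := by
  have h := Summable.sum_add_tsum_nat_add (f := fun k : ℕ => lam^k / (k.factorial : ℝ)) n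
    (Real.summable_pow_div_factorial lam)
  have he : (∑' k : ℕ, lam^k / (k.factorial : ℝ)) = Real.exp lam := by
    rw [Real.exp_eq_exp_ℝ]
    exact (NormedSpace.expSeries_div_hasSum_exp lam).tsum_eq
  rw [he] at h
  have hmul : Real.exp (-lam) * Real.exp lam = 1 := by
    rw [← Real.exp_add]; simp
  linear_combination (-Real.exp (-lam)) * h - hmul

/-- For lam ≥ 0, j ≥ 1 and i ≠ j: lam * (g(j+1,lam,{i}) - g(j,lam,{i})) ≤ 0. -/
theorem steinChen_delta_nonpos (lam : ℝ) (hlam : 0 ≤ lam) (j : ℕ) (hj : 1 ≤ j)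
    (i : ℕ) (hij : i ≠ j) :
    lam * (steinChen (j + 1) lam {i} - steinChen j lam {i}) ≤ 0 := by
  rcases eq_or_lt_of_le hlam with h0 | hl
  · rw [← h0, zero_mul]
  · obtain ⟨m, rfl⟩ : ∃ m, j = m + 1 := ⟨j - 1, by omega⟩
    have key : steinChen (m+1+1) lam {i} ≤ steinChen (m+1) lam {i} := by
      have C2 := steinChen_closed lam hl i (m+1)
      have C1 := steinChen_closed lam hl i m
      simp only [show m+1+1 = m+2 from rfl] at C2
      rw [C2, C1]
      have hmf : (((m+1).factorial : ℝ)) = ((m:ℝ)+1) * (m.factorial : ℝ) := by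
        push_cast [Nat.factorial_succ]; ring
      have hc0 : (0:ℝ) ≤ (m.factorial : ℝ) * lam ^ i * Real.exp (-lam)
          / (lam ^ (m+2) * (i.factorial : ℝ)) := by positivity
      by_cases hi : i ≤ m
      · rw [if_pos hi, if_pos (by omega : i ≤ m+1),
          steinChen_one_sub_exp_sum lam (m+2), steinChen_one_sub_exp_sum lam (m+1)]
        have t := steinChen_tail_ineq lam hlam m
        have e2 : (((m+1).factorial : ℝ) * lam ^ i) / (lam ^ (m+2) * (i.factorial : ℝ))
              * (Real.exp (-lam) * ∑' k : ℕ, lam^(k+(m+2)) / ((k+(m+2)).factorial : ℝ))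
            = ((m.factorial : ℝ) * lam ^ i * Real.exp (-lam)
                / (lam ^ (m+2) * (i.factorial : ℝ)))
              * (((m:ℝ)+1) * ∑' k : ℕ, lam^(k+(m+2)) / ((k+(m+2)).factorial : ℝ)) := by
          rw [hmf]; ring
        have e3 : ((m.factorial : ℝ) * lam ^ i) / (lam ^ (m+1) * (i.factorial : ℝ))
              * (Real.exp (-lam) * ∑' k : ℕ, lam^(k+(m+1)) / ((k+(m+1)).factorial : ℝ))
            = ((m.factorial : ℝ) * lam ^ i * Real.exp (-lam)
                / (lam ^ (m+2) * (i.factorial : ℝ)))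
              * (lam * ∑' k : ℕ, lam^(k+(m+1)) / ((k+(m+1)).factorial : ℝ)) := by
          have hp : lam ^ (m+2) = lam^(m+1) * lam := by ring
          have hfi : ((i.factorial : ℝ)) ≠ 0 := by positivity
          rw [hp]
          field_simp
        rw [e2, e3]
        exact mul_le_mul_of_nonneg_left t hc0
      · rw [if_neg (by omega : ¬ i ≤ m), if_neg (by omega : ¬ i ≤ m+1)]
        have t := steinChen_sum_ineq lam hlam m
        have e2 : (((m+1).factorial : ℝ) * lam ^ i) / (lam ^ (m+2) * (i.factorial : ℝ))
              * ((0:ℝ) - Real.exp (-lam) * ∑ k ∈ Finset.range (m+2), lam^k / (k.factorial : ℝ))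
            = -(((m.factorial : ℝ) * lam ^ i * Real.exp (-lam)
                / (lam ^ (m+2) * (i.factorial : ℝ)))
              * (((m:ℝ)+1) * ∑ k ∈ Finset.range (m+2), lam^k / (k.factorial : ℝ))) := by
          rw [hmf]; ring
        have e3 : ((m.factorial : ℝ) * lam ^ i) / (lam ^ (m+1) * (i.factorial : ℝ))
              * ((0:ℝ) - Real.exp (-lam) * ∑ k ∈ Finset.range (m+1), lam^k / (k.factorial : ℝ))
            = -(((m.factorial : ℝ) * lam ^ i * Real.exp (-lam)
                / (lam ^ (m+2) * (i.factorial : ℝ)))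
              * (lam * ∑ k ∈ Finset.range (m+1), lam^k / (k.factorial : ℝ))) := by
          have hp : lam ^ (m+2) = lam^(m+1) * lam := by ring
          have hfi : ((i.factorial : ℝ)) ≠ 0 := by positivity
          rw [hp]
          field_simp
          ring
        rw [e2, e3]
        exact neg_le_neg (mul_le_mul_of_nonneg_left t hc0)
    nlinarith [mul_nonneg hlam (sub_nonneg.mpr key)]
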